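/- Adding an edge e to a digraph G changes the characteristic polynomial of its adjacency matrix only if e lies on a directed cycle of the new graph G+e. Equivalently, if the new edge (i,j) is not contained in any directed cycle of G+e, then char(A + E_{i,j}) = char(A). -/

import Mathlib

open Matrix

theorem stmt11 (n : ℕ) (A : Matrix (Fin n) (Fin n) ℂ)
    (h01 : ∀ a b, A a b = 0 ∨ A a b = 1)
    (i j : Fin n) (hij : A i j = 0)
    (A' : Matrix (Fin n) (Fin n) ℂ)
    (hA' : A' = A + Matrix.single i j 1)
    (hnocycle : ¬ Relation.ReflTransGen (fun a b => A' a b ≠ 0) j i) :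
    A'.charpoly = A.charpoly := by
  classical
  set p : Fin n → Prop := fun a => Relation.ReflTransGen (fun a b => A' a b ≠ 0) j a with hp
  have hpj : p j := Relation.ReflTransGen.refl
  have hpi : ¬ p i := hnocycle
  -- entries agree except at (i,j)
  have hentry : ∀ a b, (a ≠ i ∨ b ≠ j) → A' a b = A a b := by
    intro a b hab
    subst hA'
    rcases hab with h | h <;>
      simp [Matrix.single, Matrix.add_apply, h, Ne.symm h]
  -- edges out of p stay in p (for A')
  have hclosed : ∀ a b, p a → ¬ p b → A' a b = 0 := by
    intro a b ha hb
    by_contra h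
    exact hb (ha.tail h)
  have hclosedA : ∀ a b, p a → ¬ p b → A a b = 0 := by
    intro a b ha hb
    have hai : a ≠ i := fun h => hpi (h ▸ ha)
    rw [← hentry a b (Or.inl hai)]
    exact hclosed a b ha hb
  have hchar : ∀ (M : Matrix (Fin n) (Fin n) ℂ),
      (∀ a b, p a → ¬ p b → M a b = 0) →
      M.charpoly = ((M.charmatrix).toSquareBlockProp p).det *
        ((M.charmatrix).toSquareBlockProp fun a => ¬ p a).det := by
    intro M hM
    rw [Matrix.charpoly]
    apply Matrix.twoBlockTriangular_det'
    intro a ha b hb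
    have hab : a ≠ b := fun h => hb (h ▸ ha)
    simp [Matrix.charmatrix_apply_ne _ _ _ hab, hM a b ha hb]
  rw [hchar A' hclosed, hchar A hclosedA]
  have hblock1 : (A'.charmatrix).toSquareBlockProp p = (A.charmatrix).toSquareBlockProp p := by
    ext a b
    have : A' a.1 b.1 = A a.1 b.1 :=
      hentry _ _ (Or.inl fun h => hpi (h ▸ a.2))
    simp [Matrix.toSquareBlockProp, Matrix.charmatrix, Matrix.sub_apply, this]
  have hblock2 : ((A'.charmatrix).toSquareBlockProp fun a => ¬ p a) =
      ((A.charmatrix).toSquareBlockProp fun a => ¬ p a) := by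
    ext a b
    have : A' a.1 b.1 = A a.1 b.1 :=
      hentry _ _ (Or.inr fun h => b.2 (h ▸ hpj))
    simp [Matrix.toSquareBlockProp, Matrix.charmatrix, Matrix.sub_apply, this]
  rw [hblock1, hblock2]
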